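/- Let θ > 0 and let g : ℝ × ℝ → ℝ be given by g(x,n) = n·((R₁ - T₁)·x + (S₁ - P₁)·(1-x)) + (1-n)·((R₀ - T₀)·x + (S₀ - P₀)·(1-x)) for real parameters R₀,S₀,T₀,P₀,R₁,S₁,T₁,P₁. Define the smooth vector fields F(x,n) = (x(1-x)·g(x,n), n(1-n)·(-1+(1+θ)x)) and G(x,n) = (x²(1-x)(1-n), 0) on ℝ². Then the Lie bracket [F,G] = (DG)F − (DF)G has second component equal to −n(1-n)(1+θ)·x²(1-x)(1-n) at every point (x,n); in particular, the second component of [F,G](x,n) is nonzero for every (x,n) ∈ (0,1)². -/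

import Mathlib

/-- The second component of the Lie bracket [F,G] = (DG)F − (DF)G of the
feedback-evolving game vector field F and the control vector field G equals
−n(1−n)(1+θ)·x²(1−x)(1−n) everywhere, and in particular is nonzero on (0,1)². -/
theorem lie_bracket_second_component
    (θ R₀ S₀ T₀ P₀ R₁ S₁ T₁ P₁ : ℝ) (hθ : 0 < θ)
    (g : ℝ × ℝ → ℝ)
    (hg : ∀ x n : ℝ, g (x, n)
      = n * ((R₁ - T₁) * x + (S₁ - P₁) * (1 - x))
        + (1 - n) * ((R₀ - T₀) * x + (S₀ - P₀) * (1 - x)))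
    (F G : ℝ × ℝ → ℝ × ℝ)
    (hF : ∀ x n : ℝ, F (x, n)
      = (x * (1 - x) * g (x, n), n * (1 - n) * (-1 + (1 + θ) * x)))
    (hG : ∀ x n : ℝ, G (x, n) = (x ^ 2 * (1 - x) * (1 - n), 0))
    (bracket : ℝ × ℝ → ℝ × ℝ)
    (hbracket : ∀ p : ℝ × ℝ, bracket p = fderiv ℝ G p (F p) - fderiv ℝ F p (G p)) :
    (∀ x n : ℝ,
      (bracket (x, n)).2 = -(n * (1 - n) * (1 + θ)) * (x ^ 2 * (1 - x) * (1 - n))) ∧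
    (∀ x n : ℝ, x ∈ Set.Ioo (0 : ℝ) 1 → n ∈ Set.Ioo (0 : ℝ) 1 →
      (bracket (x, n)).2 ≠ 0) := by
  have hFeq : F = fun p : ℝ × ℝ =>
      (p.1 * (1 - p.1) * (p.2 * ((R₁ - T₁) * p.1 + (S₁ - P₁) * (1 - p.1))
        + (1 - p.2) * ((R₀ - T₀) * p.1 + (S₀ - P₀) * (1 - p.1))),
       p.2 * (1 - p.2) * (-1 + (1 + θ) * p.1)) := by
    funext p
    rw [show p = (p.1, p.2) from rfl, hF, hg]
  have hGeq : G = fun p : ℝ × ℝ => (p.1 ^ 2 * (1 - p.1) * (1 - p.2), (0 : ℝ)) := by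
    funext p
    rw [show p = (p.1, p.2) from rfl, hG]
  have key : ∀ x n : ℝ,
      (bracket (x, n)).2 = -(n * (1 - n) * (1 + θ)) * (x ^ 2 * (1 - x) * (1 - n)) := by
    intro x n
    have hf1 : DifferentiableAt ℝ (fun p : ℝ × ℝ =>
        p.1 * (1 - p.1) * (p.2 * ((R₁ - T₁) * p.1 + (S₁ - P₁) * (1 - p.1))
          + (1 - p.2) * ((R₀ - T₀) * p.1 + (S₀ - P₀) * (1 - p.1)))) (x, n) := by
      fun_prop
    have hg1 : DifferentiableAt ℝ
        (fun p : ℝ × ℝ => p.1 ^ 2 * (1 - p.1) * (1 - p.2)) (x, n) := by fun_prop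
    have hf2 : HasFDerivAt (fun p : ℝ × ℝ => p.2 * (1 - p.2) * (-1 + (1 + θ) * p.1))
        ((n * (1 - n)) • ((0 : ℝ × ℝ →L[ℝ] ℝ)
            + (1 + θ) • ContinuousLinearMap.fst ℝ ℝ ℝ)
          + (-1 + (1 + θ) * x) • ((n : ℝ) • ((0 : ℝ × ℝ →L[ℝ] ℝ)
            - ContinuousLinearMap.snd ℝ ℝ ℝ)
            + (1 - n) • ContinuousLinearMap.snd ℝ ℝ ℝ)) (x, n) := by
      exact (hasFDerivAt_snd.mul ((hasFDerivAt_const (1 : ℝ) ((x, n) : ℝ × ℝ)).sub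
          hasFDerivAt_snd)).mul
        ((hasFDerivAt_const (-1 : ℝ) ((x, n) : ℝ × ℝ)).add
          (hasFDerivAt_fst.const_mul (1 + θ)))
    have hFd : fderiv ℝ F (x, n) =
        (fderiv ℝ (fun p : ℝ × ℝ =>
          p.1 * (1 - p.1) * (p.2 * ((R₁ - T₁) * p.1 + (S₁ - P₁) * (1 - p.1))
            + (1 - p.2) * ((R₀ - T₀) * p.1 + (S₀ - P₀) * (1 - p.1)))) (x, n)).prod
          (fderiv ℝ (fun p : ℝ × ℝ => p.2 * (1 - p.2) * (-1 + (1 + θ) * p.1)) (x, n)) := by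
      rw [hFeq]
      exact hf1.fderiv_prodMk hf2.differentiableAt
    have hGd : fderiv ℝ G (x, n) =
        (fderiv ℝ (fun p : ℝ × ℝ => p.1 ^ 2 * (1 - p.1) * (1 - p.2)) (x, n)).prod
          (fderiv ℝ (fun _ : ℝ × ℝ => (0 : ℝ)) (x, n)) := by
      rw [hGeq]
      exact hg1.fderiv_prodMk (differentiableAt_const 0)
    rw [hbracket, Prod.snd_sub, hFd, hGd, ContinuousLinearMap.prod_apply,
      ContinuousLinearMap.prod_apply, fderiv_fun_const, hf2.fderiv]
    simp only [hG x n, ContinuousLinearMap.add_apply, ContinuousLinearMap.smul_apply,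
      ContinuousLinearMap.zero_apply, ContinuousLinearMap.sub_apply,
      ContinuousLinearMap.coe_fst', ContinuousLinearMap.coe_snd', Pi.zero_apply,
      smul_eq_mul]
    ring
  refine ⟨key, fun x n hx hn => ?_⟩
  rw [key x n]
  have h1 : 0 < n * (1 - n) * (1 + θ) :=
    mul_pos (mul_pos hn.1 (by linarith [hn.2])) (by linarith)
  have h2 : 0 < x ^ 2 * (1 - x) * (1 - n) :=
    mul_pos (mul_pos (pow_pos hx.1 2) (by linarith [hx.2])) (by linarith [hn.2])
  exact ne_of_lt (by nlinarith)
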